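/- Let k, q ≥ 1, let F ∈ L^k_q be a k-labelled graph, and let m ≥ 0. Then there exists a formula φ_m ∈ C^k_q such that for every k-labelled graph G whose set of assigned labels contains the set of assigned labels of F, G ⊨ φ_m if and only if hom(F,G) = m. -/

import Mathlib

set_option maxHeartbeats 1000000

/-! ## Bundled finite simple graphs and homomorphism counting -/

/-- A bundled finite simple graph (vertex set `Fin n`). -/
abbrev GraphB : Type := Σ n : ℕ, SimpleGraph (Fin n)

/-- The number of graph homomorphisms from `F` to `G`. -/
noncomputable def homCount {V W : Type*} (F : SimpleGraph V) (G : SimpleGraph W) : ℕ :=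
  Set.ncard {f : V → W | ∀ ⦃u v⦄, F.Adj u v → G.Adj (f u) (f v)}

/-- `G` and `H` are homomorphism indistinguishable over the class `𝓕`. -/
def HomIndist (𝓕 : Set GraphB) {V W : Type*} (G : SimpleGraph V) (H : SimpleGraph W) : Prop :=
  ∀ A ∈ 𝓕, homCount A.2 G = homCount A.2 H

/-- The homomorphism distinguishing closure of the class `𝓕`. -/
def hdCl (𝓕 : Set GraphB) : Set GraphB :=
  {A | ∀ G H : GraphB, HomIndist 𝓕 G.2 H.2 → homCount A.2 G.2 = homCount A.2 H.2}

/-! ## Pebble forest covers and the class `T^k_q` -/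

/-- A `k`-pebble forest cover of depth at most `q`.  The rooted forest is encoded by its
ancestor (partial) order `le`, in which the set of ancestors of any vertex is a chain. -/
structure PebbleForestCover {V : Type*} (G : SimpleGraph V) (k q : ℕ) where
  le : V → V → Prop
  le_refl : ∀ v, le v v
  le_antisymm : ∀ u v, le u v → le v u → u = v
  le_trans : ∀ u v w, le u v → le v w → le u w
  downChain : ∀ u v w, le u w → le v w → le u v ∨ le v u
  peb : V → Fin k
  cover : ∀ ⦃u v⦄, G.Adj u v → le u v ∨ le v u
  pebbleCond : ∀ ⦃u v w⦄, G.Adj u v → le u v → le u w → le w v → u ≠ w → peb u ≠ peb w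
  heightLE : ∀ v, Set.ncard {u | le u v} ≤ q

def HasPFC {V : Type*} (G : SimpleGraph V) (k q : ℕ) : Prop :=
  Nonempty (PebbleForestCover G k q)

/-- The class `T^k_q` of graphs admitting a `k`-pebble forest cover of depth at most `q`. -/
def Tclass (k q : ℕ) : Set GraphB := {G | HasPFC G.2 k q}

/-! ## Forest covers, treedepth, tree decompositions, treewidth -/

/-- `G` has a forest cover of height at most `q`, i.e. treedepth at most `q`. -/
def HasForestCover {V : Type*} (G : SimpleGraph V) (q : ℕ) : Prop :=
  ∃ le : V → V → Prop,
    (∀ v, le v v) ∧ (∀ u v, le u v → le v u → u = v) ∧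
    (∀ u v w, le u v → le v w → le u w) ∧
    (∀ u v w, le u w → le v w → le u v ∨ le v u) ∧
    (∀ ⦃u v⦄, G.Adj u v → le u v ∨ le v u) ∧
    (∀ v, Set.ncard {u | le u v} ≤ q)

/-- The class `TD_q` of graphs of treedepth at most `q`. -/
def TDclass (q : ℕ) : Set GraphB := {G | HasForestCover G.2 q}

/-- A tree decomposition of `G`. -/
structure TreeDecomp {V : Type*} (G : SimpleGraph V) where
  n : ℕ
  T : SimpleGraph (Fin n)
  isTree : T.IsTree
  bag : Fin n → Set V
  coversVerts : ∀ v : V, ∃ t, v ∈ bag t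
  coversEdges : ∀ ⦃u v⦄, G.Adj u v → ∃ t, u ∈ bag t ∧ v ∈ bag t
  bagsConnected : ∀ v : V, (SimpleGraph.induce {t | v ∈ bag t} T).Connected

/-- The decomposition has width at most `w`. -/
def TreeDecomp.widthLE {V : Type*} {G : SimpleGraph V} (d : TreeDecomp G) (w : ℕ) : Prop :=
  ∀ t, (d.bag t).ncard ≤ w + 1

/-- `t` lies on the (unique) path from `r` to `s` in the tree `d.T`,
i.e. `t` is an ancestor of `s` when `d.T` is rooted at `r`. -/
def TreeDecomp.anc {V : Type*} {G : SimpleGraph V} (d : TreeDecomp G) (r t s : Fin d.n) : Prop :=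
  ∀ w : d.T.Walk r s, t ∈ w.support

/-- The decomposition has depth at most `q`: for some root `r`, for every node `s`,
the union of the bags of ancestors of `s` has at most `q` vertices. -/
def TreeDecomp.depthLE {V : Type*} {G : SimpleGraph V} (d : TreeDecomp G) (q : ℕ) : Prop :=
  ∃ r : Fin d.n, ∀ s : Fin d.n, (⋃ t ∈ {t | d.anc r t s}, d.bag t).ncard ≤ q

/-- The class `TW_w` of graphs of treewidth at most `w`. -/
def TWclass (w : ℕ) : Set GraphB := {G | ∃ d : TreeDecomp G.2, d.widthLE w}

/-! ## Minors and disjoint unions -/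

/-- `H` is a minor of `G`: there are pairwise disjoint connected nonempty branch sets in `G`,
one for each vertex of `H`, such that edges of `H` are realised between branch sets. -/
def IsMinor {W V : Type*} (H : SimpleGraph W) (G : SimpleGraph V) : Prop :=
  ∃ φ : V → Option W,
    (∀ w : W, (SimpleGraph.induce {v | φ v = some w} G).Connected) ∧
    (∀ ⦃w₁ w₂⦄, H.Adj w₁ w₂ → ∃ v₁ v₂, φ v₁ = some w₁ ∧ φ v₂ = some w₂ ∧ G.Adj v₁ v₂)

/-- The disjoint union of two simple graphs. -/
def sumGraph {V W : Type*} (G : SimpleGraph V) (H : SimpleGraph W) : SimpleGraph (V ⊕ W) where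
  Adj x y :=
    match x, y with
    | Sum.inl a, Sum.inl b => G.Adj a b
    | Sum.inr a, Sum.inr b => H.Adj a b
    | _, _ => False
  symm := ⟨by
    rintro (a | a) (b | b) h
    · exact G.adj_symm h
    · exact h.elim
    · exact h.elim
    · exact H.adj_symm h⟩
  loopless := ⟨by
    rintro (a | a) h
    · exact G.irrefl h
    · exact H.irrefl h⟩

/-! ## Cops-and-robber games -/

/-- A robber move from `v` to `u`: a walk in `G` none of whose vertices lies in `A`
(`A` will be `X ∩ Y` for old/new cop positions `X`, `Y` on `G` plus a `k`-clique). -/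
def RobberMove {V : Type*} {k : ℕ} (G : SimpleGraph V) (A : Finset (V ⊕ Fin k)) (v u : V) :
    Prop :=
  ∃ w : G.Walk v u, ∀ x ∈ w.support, Sum.inl x ∉ A

/-- The initial cop position: all `k` cops on the auxiliary clique. -/
def initPos (V : Type*) [DecidableEq V] (k : ℕ) : Finset (V ⊕ Fin k) :=
  Finset.univ.image Sum.inr

/-- In the (non-monotone) cops-and-robber game on `G` with `k` cops, from cop position `X`
and robber position `v`, Cops can catch the robber within `q` further rounds. -/
def CopsCatch {V : Type*} [DecidableEq V] (G : SimpleGraph V) (k : ℕ) :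
    ℕ → Finset (V ⊕ Fin k) → V → Prop
  | 0, _, _ => False
  | q + 1, X, v =>
      ∃ Y : Finset (V ⊕ Fin k), Y.card = k ∧ (X ∩ Y).card = k - 1 ∧
        ∀ u : V, RobberMove G (X ∩ Y) v u → (Sum.inl u ∈ Y ∨ CopsCatch G k q Y u)

/-- Monotone variant: Cops may only move so that the robber escape space does not grow. -/
def MonCopsCatch {V : Type*} [DecidableEq V] (G : SimpleGraph V) (k : ℕ) :
    ℕ → Finset (V ⊕ Fin k) → V → Prop
  | 0, _, _ => False
  | q + 1, X, v =>
      ∃ Y : Finset (V ⊕ Fin k), Y.card = k ∧ (X ∩ Y).card = k - 1 ∧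
        (∀ u : V, RobberMove G (X ∩ Y) v u → RobberMove G X v u) ∧
        ∀ u : V, RobberMove G (X ∩ Y) v u → (Sum.inl u ∈ Y ∨ MonCopsCatch G k q Y u)

/-- Robber can evade capture for `q` further rounds from cop position `X`, robber at `v`. -/
def RobberEsc {V : Type*} [DecidableEq V] (G : SimpleGraph V) (k : ℕ) :
    ℕ → Finset (V ⊕ Fin k) → V → Prop
  | 0, _, _ => True
  | q + 1, X, v =>
      ∀ Y : Finset (V ⊕ Fin k), Y.card = k → (X ∩ Y).card = k - 1 →
        ∃ u : V, RobberMove G (X ∩ Y) v u ∧ Sum.inl u ∉ Y ∧ RobberEsc G k q Y u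

/-- Cops has a winning strategy in the `q`-round `k`-cops-and-robber game on `G`. -/
def CopsWinGame {V : Type*} [DecidableEq V] (G : SimpleGraph V) (k q : ℕ) : Prop :=
  ∀ v : V, CopsCatch G k q (initPos V k) v

/-- Cops has a winning strategy in the monotone `q`-round `k`-cops-and-robber game on `G`. -/
def MonCopsWinGame {V : Type*} [DecidableEq V] (G : SimpleGraph V) (k q : ℕ) : Prop :=
  ∀ v : V, MonCopsCatch G k q (initPos V k) v

/-- Robber has a winning strategy in the `q`-round `k`-cops-and-robber game on `G`. -/
def RobberWinsGame {V : Type*} [DecidableEq V] (G : SimpleGraph V) (k q : ℕ) : Prop :=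
  ∃ v : V, RobberEsc G k q (initPos V k) v

/-- The `h × ℓ` grid graph. -/
def gridGraph (h l : ℕ) : SimpleGraph (Fin h × Fin l) :=
  (SimpleGraph.pathGraph h).boxProd (SimpleGraph.pathGraph l)

/-! ## The CFI-like construction `G_U` -/

/-- Vertices of `G_U`: pairs `(v, S)` with `S` a set of edges incident to `v` whose
parity matches `|{v} ∩ U|`. -/
def CFIvert {V : Type*} (G : SimpleGraph V) (U : Set V) : Type _ :=
  {p : V × Set (Sym2 V) // p.2 ⊆ G.incidenceSet p.1 ∧ (Even p.2.ncard ↔ p.1 ∉ U)}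

/-- The CFI-like graph `G_U` of Roberson. -/
def CFI {V : Type*} (G : SimpleGraph V) (U : Set V) : SimpleGraph (CFIvert G U) where
  Adj x y := G.Adj x.1.1 y.1.1 ∧ s(x.1.1, y.1.1) ∉ symmDiff x.1.2 y.1.2
  symm := ⟨by
    rintro x y ⟨h1, h2⟩
    refine ⟨h1.symm, ?_⟩
    rw [Sym2.eq_swap, symmDiff_comm]
    exact h2⟩
  loopless := ⟨by
    rintro x ⟨h1, _⟩
    exact G.irrefl h1⟩

/-! ## Counting first-order logic -/

/-- Formulae of first-order counting logic `C` with variables indexed by `α`. -/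
inductive CForm (α : Type) : Type
  | eq : α → α → CForm α
  | adj : α → α → CForm α
  | not : CForm α → CForm α
  | or : CForm α → CForm α → CForm α
  | and : CForm α → CForm α → CForm α
  | count : ℕ → α → CForm α → CForm α

namespace CForm

variable {α : Type} [DecidableEq α]

/-- Quantifier rank. -/
def qr : CForm α → ℕ
  | eq _ _ => 0
  | adj _ _ => 0
  | not φ => qr φ
  | or φ ψ => max (qr φ) (qr ψ)
  | and φ ψ => max (qr φ) (qr ψ)
  | count _ _ φ => qr φ + 1

/-- Free variables. -/
def freeVars : CForm α → Finset α
  | eq i j => {i, j}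
  | adj i j => {i, j}
  | not φ => freeVars φ
  | or φ ψ => freeVars φ ∪ freeVars ψ
  | and φ ψ => freeVars φ ∪ freeVars ψ
  | count _ i φ => (freeVars φ).erase i

/-- Satisfaction in a simple graph, relative to a partial variable assignment. -/
def Sat {V : Type*} (G : SimpleGraph V) : CForm α → (α → Option V) → Prop
  | eq i j, a => ∃ v, a i = some v ∧ a j = some v
  | adj i j, a => ∃ v w, a i = some v ∧ a j = some w ∧ G.Adj v w
  | not φ, a => ¬ Sat G φ a
  | or φ ψ, a => Sat G φ a ∨ Sat G ψ a
  | and φ ψ, a => Sat G φ a ∧ Sat G ψ a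
  | count t i φ, a =>
      ∃ s : Finset V, t ≤ s.card ∧ ∀ v ∈ s, Sat G φ (fun j => if j = i then some v else a j)

/-- Guarded formulae: every quantifier occurs as `∃^{≥t} y (E x y ∧ ψ)` with `x ≠ y`. -/
def Guarded : CForm α → Prop
  | count _ y (and (adj x y') χ) => y' = y ∧ x ≠ y ∧ Guarded χ
  | count _ _ _ => False
  | eq _ _ => True
  | adj _ _ => True
  | not φ => Guarded φ
  | or φ ψ => Guarded φ ∧ Guarded ψ
  | and φ ψ => Guarded φ ∧ Guarded ψ

end CForm

/-! ## Labelled graphs, products, construction trees -/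

/-- A `k`-labelled finite graph. -/
structure LGraph (k : ℕ) : Type 1 where
  V : Type
  fin : Finite V
  G : SimpleGraph V
  ν : Fin k → Option V

namespace LGraph

variable {k : ℕ}

/-- Number of homomorphisms between `k`-labelled graphs. -/
noncomputable def lhomCount (F G : LGraph k) : ℕ :=
  Set.ncard {f : F.V → G.V |
    (∀ ⦃u v⦄, F.G.Adj u v → G.G.Adj (f u) (f v)) ∧
    ∀ i v, F.ν i = some v → ∃ w, G.ν i = some w ∧ f v = w}

/-- Remove label `i`. -/
def removeLabel (A : LGraph k) (i : Fin k) : LGraph k :=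
  { A with ν := fun j => if j = i then none else A.ν j }

/-- Every vertex carries at least one label. -/
def FullyLabelled (A : LGraph k) : Prop := ∀ v : A.V, ∃ i, A.ν i = some v

/-- Adjacency on the disjoint sum of two labelled graphs. -/
def sumAdj (A B : LGraph k) : A.V ⊕ B.V → A.V ⊕ B.V → Prop
  | Sum.inl u, Sum.inl v => A.G.Adj u v
  | Sum.inr u, Sum.inr v => B.G.Adj u v
  | _, _ => False

lemma sumAdj_symm (A B : LGraph k) : ∀ x y, sumAdj A B x y → sumAdj A B y x := by
  rintro (u | u) (v | v) h
  · exact A.G.adj_symm h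
  · exact h.elim
  · exact h.elim
  · exact B.G.adj_symm h

/-- The gluing relation: vertices carrying the same label get identified. -/
def glue (A B : LGraph k) : A.V ⊕ B.V → A.V ⊕ B.V → Prop := fun x y =>
  ∃ i : Fin k, (A.ν i).map Sum.inl = some x ∧ (B.ν i).map Sum.inr = some y

/-- The product of two `k`-labelled graphs: disjoint union, identify equally labelled
vertices, suppress loops and parallel edges. -/
def product (A B : LGraph k) : LGraph k where
  V := Quot (glue A B)
  fin := by
    haveI := A.fin
    haveI := B.fin
    exact Finite.of_surjective (Quot.mk _) (fun x => Quot.inductionOn x fun a => ⟨a, rfl⟩)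
  G :=
    { Adj := fun x y =>
        x ≠ y ∧ ∃ u v, Quot.mk _ u = x ∧ Quot.mk _ v = y ∧ sumAdj A B u v
      symm := ⟨by
        rintro x y ⟨hne, u, v, hu, hv, h⟩
        exact ⟨hne.symm, v, u, hv, hu, sumAdj_symm A B u v h⟩⟩
      loopless := ⟨fun x h => h.1 rfl⟩ }
  ν := fun i =>
    ((A.ν i).map fun v => Quot.mk _ (Sum.inl v)).orElse
      fun _ => (B.ν i).map fun v => Quot.mk _ (Sum.inr v)

/-- Isomorphism of labelled graphs. -/
def LIso (A B : LGraph k) : Prop :=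
  ∃ e : A.G ≃g B.G, ∀ i, (A.ν i).map (fun v => e v) = B.ν i

end LGraph

/-- `k`-construction trees: leaves carry (fully labelled) graphs, unary nodes remove
one label, binary nodes take products. -/
inductive CT (k : ℕ) : Type 1
  | leaf : LGraph k → CT k
  | elim : Fin k → CT k → CT k
  | prod : CT k → CT k → CT k

namespace CT

variable {k : ℕ}

/-- The labelled graph constructed by a construction tree. -/
def graphOf : CT k → LGraph k
  | leaf A => A
  | elim i t => (graphOf t).removeLabel i
  | prod t₁ t₂ => (graphOf t₁).product (graphOf t₂)

/-- Validity: leaves are fully labelled and elimination nodes remove an assigned label. -/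
def Valid : CT k → Prop
  | leaf A => A.FullyLabelled
  | elim i t => Valid t ∧ (graphOf t).ν i ≠ none
  | prod t₁ t₂ => Valid t₁ ∧ Valid t₂

/-- Guarded validity: labels may only be removed from vertices with a labelled neighbour. -/
def GuardedValid : CT k → Prop
  | leaf A => A.FullyLabelled
  | elim i t => GuardedValid t ∧
      ∃ v, (graphOf t).ν i = some v ∧
        ∃ j w, (graphOf t).ν j = some w ∧ (graphOf t).G.Adj v w
  | prod t₁ t₂ => GuardedValid t₁ ∧ GuardedValid t₂

/-- The elimination depth: maximal number of elimination nodes on a root-to-leaf path. -/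
def elimDepth : CT k → ℕ
  | leaf _ => 0
  | elim _ t => elimDepth t + 1
  | prod t₁ t₂ => max (elimDepth t₁) (elimDepth t₂)

end CT

/-- The class `L^k_q` of `k`-labelled graphs admitting a `k`-construction tree of
elimination depth at most `q`. -/
def Lclass (k q : ℕ) : Set (LGraph k) :=
  {F | ∃ t : CT k, CT.Valid t ∧ CT.elimDepth t ≤ q ∧ LGraph.LIso (CT.graphOf t) F}

/-- The class `GL^k_q`: as `L^k_q`, but labels may only be removed from vertices with a
labelled neighbour. -/
def GLclass (k q : ℕ) : Set (LGraph k) :=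
  {F | ∃ t : CT k, CT.GuardedValid t ∧ CT.elimDepth t ≤ q ∧ LGraph.LIso (CT.graphOf t) F}

/-- The class `GE^k_q` of unlabelled graphs underlying graphs in `GL^k_q`. -/
def GEclass (k q : ℕ) : Set GraphB :=
  {G | ∃ F ∈ GLclass k q, Nonempty (F.G ≃g G.2)}

/-! ## The bijective pebble game -/

/-- `γ` is a partial isomorphism between `G` and `H`. -/
def PartialIso {V W : Type*} (G : SimpleGraph V) (H : SimpleGraph W) {k : ℕ}
    (γ : Fin k → Option (V × W)) : Prop :=
  ∀ i j vi wi vj wj, γ i = some (vi, wi) → γ j = some (vj, wj) →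
    ((vi = vj ↔ wi = wj) ∧ (G.Adj vi vj ↔ H.Adj wi wj))

/-- Duplicator wins the `q`-round bijective `k`-pebble game on `G` and `H` from position `γ`. -/
def DupWins {V W : Type*} (G : SimpleGraph V) (H : SimpleGraph W) (k : ℕ) :
    ℕ → (Fin k → Option (V × W)) → Prop
  | 0, γ => PartialIso G H γ
  | q + 1, γ => PartialIso G H γ ∧
      ∀ p : Fin k, ∃ f : V ≃ W, ∀ v : V,
        DupWins G H k q (fun j => if j = p then some (v, f v) else γ j)

namespace CForm

variable {α : Type} [DecidableEq α]
set_option linter.unusedSectionVars false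

/-- A formula that is always true. -/
def tru (i0 : α) : CForm α := not (and (eq i0 i0) (not (eq i0 i0)))

/-- A formula that is always false. -/
def fls (i0 : α) : CForm α := and (eq i0 i0) (not (eq i0 i0))

@[simp] lemma qr_tru (i0 : α) : qr (tru i0) = 0 := rfl
@[simp] lemma qr_fls (i0 : α) : qr (fls i0) = 0 := rfl

@[simp] lemma sat_fls {V : Type*} (G : SimpleGraph V) (i0 : α) (a : α → Option V) :
    ¬ Sat G (fls i0) a := fun h => h.2 h.1

@[simp] lemma sat_tru {V : Type*} (G : SimpleGraph V) (i0 : α) (a : α → Option V) :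
    Sat G (tru i0) a := fun h => h.2 h.1

def bigAnd (i0 : α) : List (CForm α) → CForm α
  | [] => tru i0
  | φ :: l => and φ (bigAnd i0 l)

def bigOr (i0 : α) : List (CForm α) → CForm α
  | [] => fls i0
  | φ :: l => or φ (bigOr i0 l)

lemma sat_bigAnd {V : Type*} (G : SimpleGraph V) (i0 : α) (l : List (CForm α))
    (a : α → Option V) : Sat G (bigAnd i0 l) a ↔ ∀ φ ∈ l, Sat G φ a := by
  induction l with
  | nil => simp [bigAnd]
  | cons φ l ih => simp [bigAnd, Sat, ih]

lemma sat_bigOr {V : Type*} (G : SimpleGraph V) (i0 : α) (l : List (CForm α))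
    (a : α → Option V) : Sat G (bigOr i0 l) a ↔ ∃ φ ∈ l, Sat G φ a := by
  induction l with
  | nil => simp [bigOr]
  | cons φ l ih => simp [bigOr, Sat, ih]

lemma qr_bigAnd_le (i0 : α) (l : List (CForm α)) (n : ℕ) (h : ∀ φ ∈ l, qr φ ≤ n) :
    qr (bigAnd i0 l) ≤ n := by
  induction l with
  | nil => simp [bigAnd]
  | cons φ l ih =>
      simp only [bigAnd, qr, max_le_iff]
      exact ⟨h φ (by simp), ih fun ψ hψ => h ψ (by simp [hψ])⟩

lemma qr_bigOr_le (i0 : α) (l : List (CForm α)) (n : ℕ) (h : ∀ φ ∈ l, qr φ ≤ n) :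
    qr (bigOr i0 l) ≤ n := by
  induction l with
  | nil => simp [bigOr]
  | cons φ l ih =>
      simp only [bigOr, qr, max_le_iff]
      exact ⟨h φ (by simp), ih fun ψ hψ => h ψ (by simp [hψ])⟩

/-- Exactly-`n` counting quantifier. -/
def exCnt (n : ℕ) (i : α) (φ : CForm α) : CForm α :=
  and (count n i φ) (not (count (n + 1) i φ))

@[simp] lemma qr_exCnt (n : ℕ) (i : α) (φ : CForm α) : qr (exCnt n i φ) = qr φ + 1 := by
  simp [exCnt, qr]

lemma sat_count_iff {V : Type*} [Finite V] (G : SimpleGraph V) (n : ℕ) (i : α)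
    (φ : CForm α) (a : α → Option V) :
    Sat G (count n i φ) a ↔
      n ≤ {v : V | Sat G φ (fun j => if j = i then some v else a j)}.ncard := by
  constructor
  · rintro ⟨s, hs, hsat⟩
    calc n ≤ s.card := hs
      _ = (↑s : Set V).ncard := (Set.ncard_coe_finset s).symm
      _ ≤ _ := Set.ncard_le_ncard (fun v hv => hsat v (by simpa using hv)) (Set.toFinite _)
  · intro h
    refine ⟨(Set.toFinite {v : V | Sat G φ (fun j => if j = i then some v else a j)}).toFinset,
      ?_, ?_⟩
    · rwa [Set.ncard_eq_toFinset_card _ (Set.toFinite _)] at h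
    · intro v hv; simpa using hv

lemma sat_exCnt_iff {V : Type*} [Finite V] (G : SimpleGraph V) (n : ℕ) (i : α)
    (φ : CForm α) (a : α → Option V) :
    Sat G (exCnt n i φ) a ↔
      {v : V | Sat G φ (fun j => if j = i then some v else a j)}.ncard = n := by
  have h1 := sat_count_iff G n i φ a
  have h2 := sat_count_iff G (n + 1) i φ a
  constructor
  · rintro ⟨ha, hb⟩
    have hx := h1.1 ha
    have hy : ¬ (n + 1 ≤ _) := fun h => hb (h2.2 h)
    omega
  · intro h
    exact ⟨h1.2 (by omega), fun hb => by have := h2.1 hb; omega⟩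

end CForm
namespace LGraph

variable {k : ℕ}

/-- Replace the underlying graph of a labelled graph. -/
def withG (A : LGraph k) (H : SimpleGraph A.V) : LGraph k := {A with G := H}

/-- Set label `i` to vertex `w`. -/
def setLabel (G : LGraph k) (i : Fin k) (w : G.V) : LGraph k :=
  {G with ν := fun j => if j = i then some w else G.ν j}

end LGraph

lemma leaf_formula {k : ℕ} (hk : 1 ≤ k) (F : LGraph k) (hFL : F.FullyLabelled) (m : ℕ) :
    ∃ φ : CForm (Fin k), CForm.qr φ ≤ 0 ∧
      ∀ G : LGraph k, (∀ i, (F.ν i).isSome → (G.ν i).isSome) →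
        (CForm.Sat G.G φ G.ν ↔ F.lhomCount G = m) := by
  classical
  set i0 : Fin k := ⟨0, hk⟩ with hi0
  set fml : Fin k × Fin k → CForm (Fin k) :=
    (fun p => if ∃ v, F.ν p.1 = some v ∧ F.ν p.2 = some v then CForm.eq p.1 p.2
      else if ∃ v w, F.ν p.1 = some v ∧ F.ν p.2 = some w ∧ F.G.Adj v w then CForm.adj p.1 p.2
      else CForm.tru i0) with hfml
  set ψ : CForm (Fin k) := CForm.bigAnd i0
    (((Finset.univ : Finset (Fin k × Fin k)).toList).map fml) with hψdef
  have hqr : CForm.qr ψ ≤ 0 := by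
    apply CForm.qr_bigAnd_le
    intro φ hφ
    simp only [List.mem_map] at hφ
    obtain ⟨p, -, rfl⟩ := hφ
    simp only [hfml]
    split_ifs <;> simp [CForm.qr]
  have key : ∀ G : LGraph k, (∀ i, (F.ν i).isSome → (G.ν i).isSome) →
      (CForm.Sat G.G ψ G.ν ↔ F.lhomCount G = 1) ∧ F.lhomCount G ≤ 1 := by
    intro G hcov
    set S := {f : F.V → G.V | (∀ ⦃u v⦄, F.G.Adj u v → G.G.Adj (f u) (f v)) ∧
      ∀ i v, F.ν i = some v → ∃ w, G.ν i = some w ∧ f v = w} with hS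
    have hcount : F.lhomCount G = S.ncard := rfl
    have hsub : S.Subsingleton := by
      rintro f ⟨-, hf⟩ f' ⟨-, hf'⟩
      funext v
      obtain ⟨i, hi⟩ := hFL v
      obtain ⟨w, hw, hfw⟩ := hf i v hi
      obtain ⟨w', hw', hfw'⟩ := hf' i v hi
      rw [hfw, hfw']
      rw [hw] at hw'
      exact Option.some_inj.mp hw'
    have hsat : CForm.Sat G.G ψ G.ν ↔ S.Nonempty := by
      constructor
      · intro hs
        rw [hψdef, CForm.sat_bigAnd] at hs
        have conj : ∀ p : Fin k × Fin k, CForm.Sat G.G (fml p) G.ν := by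
          intro p
          exact hs _ (List.mem_map.mpr ⟨p, by simp, rfl⟩)
        have hℓ : ∀ v : F.V, F.ν (Classical.choose (hFL v)) = some v :=
          fun v => Classical.choose_spec (hFL v)
        have hget : ∀ v : F.V, (G.ν (Classical.choose (hFL v))).isSome := by
          intro v
          exact hcov _ (by rw [hℓ v]; rfl)
        set f : F.V → G.V := fun v => (G.ν (Classical.choose (hFL v))).get (hget v) with hf
        have hflab : ∀ i v, F.ν i = some v → ∃ w, G.ν i = some w ∧ f v = w := by
          intro i v hi
          have hc := conj (i, Classical.choose (hFL v))
          simp only [hfml] at hc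
          rw [if_pos ⟨v, hi, hℓ v⟩] at hc
          obtain ⟨w, hw1, hw2⟩ := hc
          refine ⟨w, hw1, ?_⟩
          simp only [hf]
          simp only [hw2, Option.get_some]
        refine ⟨f, ?_, hflab⟩
        · intro u v hadj
          have hc := conj (Classical.choose (hFL u), Classical.choose (hFL v))
          simp only [hfml] at hc
          rw [if_neg, if_pos ⟨u, v, hℓ u, hℓ v, hadj⟩] at hc
          · obtain ⟨w, w', hw, hw', hGadj⟩ := hc
            have h1 : f u = w := by simp only [hf]; simp only [hw, Option.get_some]
            have h2 : f v = w' := by simp only [hf]; simp only [hw', Option.get_some]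
            rw [h1, h2]; exact hGadj
          · rintro ⟨x, hx1, hx2⟩
            rw [hℓ u] at hx1; rw [hℓ v] at hx2
            exact hadj.ne (by rw [Option.some_inj.mp hx1, Option.some_inj.mp hx2])
      · rintro ⟨f, hfadj, hflab⟩
        rw [hψdef, CForm.sat_bigAnd]
        intro φ hφ
        simp only [List.mem_map] at hφ
        obtain ⟨p, -, rfl⟩ := hφ
        simp only [hfml]
        split_ifs with h1 h2
        · obtain ⟨v, hv1, hv2⟩ := h1
          obtain ⟨w, hw, hfw⟩ := hflab p.1 v hv1
          obtain ⟨w', hw', hfw'⟩ := hflab p.2 v hv2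
          exact ⟨f v, by rw [hw, hfw], by rw [hw', hfw']⟩
        · obtain ⟨v, w, hv, hw, hadj⟩ := h2
          obtain ⟨x, hx, hfx⟩ := hflab p.1 v hv
          obtain ⟨y, hy, hfy⟩ := hflab p.2 w hw
          exact ⟨f v, f w, by rw [hx, hfx], by rw [hy, hfy], hfadj hadj⟩
        · exact CForm.sat_tru _ _ _
    constructor
    · rw [hsat, hcount]
      constructor
      · rintro ⟨f, hf⟩
        rw [hsub.eq_singleton_of_mem hf]
        exact Set.ncard_singleton f
      · intro h
        exact Set.nonempty_of_ncard_ne_zero (by omega)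
    · rw [hcount]
      rcases Set.eq_empty_or_nonempty S with h | ⟨f, hf⟩
      · simp [h]
      · rw [hsub.eq_singleton_of_mem hf, Set.ncard_singleton]
  refine ⟨if m = 1 then ψ else if m = 0 then CForm.not ψ else CForm.fls i0, ?_, ?_⟩
  · split_ifs
    · exact hqr
    · exact hqr
    · simp
  · intro G hcov
    obtain ⟨h1, hle⟩ := key G hcov
    split_ifs with hm1 hm0
    · subst hm1; exact h1
    · subst hm0
      have hnot : CForm.Sat G.G (CForm.not ψ) G.ν ↔ ¬ CForm.Sat G.G ψ G.ν := Iff.rfl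
      rw [hnot, h1]
      omega
    · constructor
      · intro h; exact absurd h (CForm.sat_fls _ _ _)
      · intro h; omega
namespace LGraph

variable {k : ℕ}

@[simp] lemma removeLabel_ν (A : LGraph k) (i j : Fin k) :
    (A.removeLabel i).ν j = if j = i then none else A.ν j := rfl

@[simp] lemma setLabel_ν (G : LGraph k) (i : Fin k) (w : G.V) (j : Fin k) :
    (G.setLabel i w).ν j = if j = i then some w else G.ν j := rfl

lemma lhomCount_removeLabel (A : LGraph k) (i : Fin k) (v₀ : A.V)
    (h0 : A.ν i = some v₀) (G : LGraph k) [Fintype G.V] :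
    (A.removeLabel i).lhomCount G = ∑ w : G.V, A.lhomCount (G.setLabel i w) := by
  classical
  haveI : Finite A.V := A.fin
  haveI : Finite G.V := G.fin
  set S' := {f : A.V → G.V | (∀ ⦃u v⦄, A.G.Adj u v → G.G.Adj (f u) (f v)) ∧
    ∀ j v, (A.removeLabel i).ν j = some v → ∃ w, G.ν j = some w ∧ f v = w} with hS'def
  set S : G.V → Set (A.V → G.V) := fun w =>
    {f | (∀ ⦃u v⦄, A.G.Adj u v → G.G.Adj (f u) (f v)) ∧
      ∀ j v, A.ν j = some v → ∃ x, (G.setLabel i w).ν j = some x ∧ f v = x} with hSdef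
  have hfin : ∀ s : Set (A.V → G.V), s.Finite := fun s => Set.toFinite s
  have h1 : (A.removeLabel i).lhomCount G = S'.ncard := rfl
  have h2 : ∀ w, A.lhomCount (G.setLabel i w) = (S w).ncard := fun w => rfl
  have hmemS : ∀ w f, f ∈ S w → f v₀ = w := by
    intro w f hf
    obtain ⟨x, hx, hfx⟩ := hf.2 i v₀ h0
    rw [setLabel_ν, if_pos rfl] at hx
    rw [hfx]
    exact (Option.some_inj.mp hx).symm
  have claim1 : S' = ⋃ w, S w := by
    ext f
    simp only [Set.mem_iUnion]
    constructor
    · rintro ⟨hadj, hlab⟩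
      refine ⟨f v₀, hadj, ?_⟩
      intro j v hj
      by_cases hji : j = i
      · subst hji
        rw [h0] at hj
        refine ⟨f v₀, ?_, ?_⟩
        · rw [setLabel_ν, if_pos rfl]; rfl
        · rw [Option.some_inj.mp hj]
      · obtain ⟨w, hw, hfw⟩ := hlab j v (by rw [removeLabel_ν, if_neg hji]; exact hj)
        exact ⟨w, by rw [setLabel_ν, if_neg hji]; exact hw, hfw⟩
    · rintro ⟨w, hadj, hlab⟩
      refine ⟨hadj, ?_⟩
      intro j v hj
      have hji : j ≠ i := by
        intro h; rw [removeLabel_ν, if_pos h] at hj; cases hj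
      rw [removeLabel_ν, if_neg hji] at hj
      obtain ⟨x, hx, hfx⟩ := hlab j v hj
      rw [setLabel_ν, if_neg hji] at hx
      exact ⟨x, hx, hfx⟩
  rw [h1]
  simp only [h2]
  rw [Set.ncard_eq_toFinset_card S' (hfin S')]
  have hUnion : (hfin S').toFinset = Finset.univ.biUnion (fun w => (hfin (S w)).toFinset) := by
    ext f
    simp only [Set.Finite.mem_toFinset, Finset.mem_biUnion, Finset.mem_univ, true_and]
    rw [claim1]
    simp [Set.mem_iUnion]
  rw [hUnion, Finset.card_biUnion]
  · apply Finset.sum_congr rfl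
    intro w _
    rw [Set.ncard_eq_toFinset_card (S w) (hfin (S w))]
  · intro w _ w' _ hne
    rw [Function.onFun, Finset.disjoint_left]
    intro f hf hf'
    rw [Set.Finite.mem_toFinset] at hf hf'
    exact hne ((hmemS w f hf).symm.trans (hmemS w' f hf'))

end LGraph
section SumDecomp

variable {W : Type*} [Fintype W] [DecidableEq W]

open Finset in
lemma sum_eq_fiber_counts (f : W → ℕ) (m : ℕ) (hle : ∀ w, f w ≤ m) :
    ∑ w, f w = ∑ j : Fin m, (j.1 + 1) * (univ.filter (fun w => f w = j.1 + 1)).card := by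
  classical
  have h1 : ∑ w, f w = ∑ v ∈ range (m + 1), ∑ w ∈ univ.filter (fun w => f w = v), f w := by
    rw [Finset.sum_fiberwise_of_maps_to]
    intro w _
    exact Finset.mem_range.mpr (Nat.lt_succ_of_le (hle w))
  have h2 : ∀ v, ∑ w ∈ univ.filter (fun w => f w = v), f w
      = v * (univ.filter (fun w => f w = v)).card := by
    intro v
    rw [Finset.sum_congr rfl (fun w hw => (Finset.mem_filter.mp hw).2), Finset.sum_const,
      smul_eq_mul, mul_comm]
  rw [h1]
  simp only [h2]
  rw [Finset.sum_range_succ']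
  simp only [Nat.zero_mul, add_zero]
  rw [Fin.sum_univ_eq_sum_range (fun j => (j + 1) * (univ.filter (fun w => f w = j + 1)).card) m]

open Finset in
lemma sum_decomp (f : W → ℕ) (m : ℕ) (hm : 1 ≤ m) :
    (∑ w, f w) = m ↔
      (∀ w, f w ≤ m) ∧ ∃ c : Fin m → Fin (m + 1),
        (∑ j : Fin m, (j.1 + 1) * (c j : ℕ)) = m ∧
        (∀ j : Fin m, {w | f w = j.1 + 1}.ncard = (c j : ℕ)) := by
  classical
  have hncard : ∀ v : ℕ, {w | f w = v}.ncard = (univ.filter (fun w => f w = v)).card := by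
    intro v
    rw [Set.ncard_eq_toFinset_card']
    congr 1
    ext w
    simp
  constructor
  · intro hsum
    have hle : ∀ w, f w ≤ m := by
      intro w
      rw [← hsum]
      exact Finset.single_le_sum (fun w _ => Nat.zero_le _) (Finset.mem_univ w)
    have hbnd : ∀ j : Fin m, (univ.filter (fun w => f w = j.1 + 1)).card < m + 1 := by
      intro j
      have := sum_eq_fiber_counts f m hle
      rw [hsum] at this
      have h3 : (j.1 + 1) * (univ.filter (fun w => f w = j.1 + 1)).card
          ≤ ∑ j : Fin m, (j.1 + 1) * (univ.filter (fun w => f w = j.1 + 1)).card :=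
        Finset.single_le_sum
          (f := fun (j' : Fin m) => (j'.1 + 1) * (univ.filter (fun w => f w = j'.1 + 1)).card)
          (fun _ _ => Nat.zero_le _) (Finset.mem_univ j)
      rw [← this] at h3
      have h4 : (univ.filter (fun w => f w = j.1 + 1)).card
          ≤ (j.1 + 1) * (univ.filter (fun w => f w = j.1 + 1)).card :=
        Nat.le_mul_of_pos_left _ (by omega)
      omega
    refine ⟨hle, fun j => ⟨(univ.filter (fun w => f w = j.1 + 1)).card, hbnd j⟩, ?_, ?_⟩
    · rw [← sum_eq_fiber_counts f m hle, hsum]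
    · intro j
      exact hncard (j.1 + 1)
  · rintro ⟨hle, c, hcsum, hccard⟩
    rw [sum_eq_fiber_counts f m hle]
    calc ∑ j : Fin m, (j.1 + 1) * (univ.filter (fun w => f w = j.1 + 1)).card
        = ∑ j : Fin m, (j.1 + 1) * (c j : ℕ) := by
          apply Finset.sum_congr rfl
          intro j _
          rw [← hccard j, hncard (j.1 + 1)]
      _ = m := hcsum

end SumDecomp
lemma elim_formula {k : ℕ} (hk : 1 ≤ k) (A : LGraph k) (i : Fin k) (v₀ : A.V)
    (h0 : A.ν i = some v₀) (d : ℕ)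
    (IH : ∀ n : ℕ, ∃ φ : CForm (Fin k), CForm.qr φ ≤ d ∧
      ∀ G : LGraph k, (∀ j, (A.ν j).isSome → (G.ν j).isSome) →
        (CForm.Sat G.G φ G.ν ↔ A.lhomCount G = n)) (m : ℕ) :
    ∃ φ : CForm (Fin k), CForm.qr φ ≤ d + 1 ∧
      ∀ G : LGraph k, (∀ j, ((A.removeLabel i).ν j).isSome → (G.ν j).isSome) →
        (CForm.Sat G.G φ G.ν ↔ (A.removeLabel i).lhomCount G = m) := by
  classical
  set i0 : Fin k := ⟨0, hk⟩ with hi0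
  set Φ : ℕ → CForm (Fin k) := fun n => (IH n).choose with hΦ
  have hΦqr : ∀ n, CForm.qr (Φ n) ≤ d := fun n => (IH n).choose_spec.1
  have hΦsat : ∀ n (G' : LGraph k), (∀ j, (A.ν j).isSome → (G'.ν j).isSome) →
      (CForm.Sat G'.G (Φ n) G'.ν ↔ A.lhomCount G' = n) := fun n => (IH n).choose_spec.2
  have main : ∀ (G : LGraph k), (∀ j, ((A.removeLabel i).ν j).isSome → (G.ν j).isSome) →
      ∀ (n : ℕ) (w : G.V),
        CForm.Sat G.G (Φ n) (fun j => if j = i then some w else G.ν j)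
          ↔ A.lhomCount (G.setLabel i w) = n := by
    intro G hcov n w
    have hcov' : ∀ j, (A.ν j).isSome → ((G.setLabel i w).ν j).isSome := by
      intro j hj
      by_cases hji : j = i
      · subst hji; simp [LGraph.setLabel_ν]; rfl
      · rw [LGraph.setLabel_ν, if_neg hji]
        exact hcov j (by rw [LGraph.removeLabel_ν, if_neg hji]; exact hj)
    exact hΦsat n (G.setLabel i w) hcov'
  rcases Nat.eq_zero_or_pos m with hm | hm
  · -- m = 0
    subst hm
    refine ⟨CForm.not (CForm.count 1 i (CForm.not (Φ 0))), ?_, ?_⟩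
    · simp only [CForm.qr]
      have := hΦqr 0
      omega
    · intro G hcov
      haveI : Finite G.V := G.fin
      haveI : Fintype G.V := Fintype.ofFinite _
      have hsum := LGraph.lhomCount_removeLabel A i v₀ h0 G
      have hnot : CForm.Sat G.G (CForm.not (CForm.count 1 i (CForm.not (Φ 0)))) G.ν
          ↔ ¬ CForm.Sat G.G (CForm.count 1 i (CForm.not (Φ 0))) G.ν := Iff.rfl
      rw [hnot, CForm.sat_count_iff]
      have hset : {v : G.V | CForm.Sat G.G (CForm.not (Φ 0))
          (fun j => if j = i then some v else G.ν j)}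
          = {w : G.V | ¬ A.lhomCount (G.setLabel i w) = 0} := by
        ext w
        exact not_congr (main G hcov 0 w)
      rw [hset, hsum]
      rw [not_le]
      constructor
      · intro h
        have hempty : {w : G.V | ¬ A.lhomCount (G.setLabel i w) = 0} = ∅ := by
          rw [← Set.ncard_eq_zero (Set.toFinite _)]
          omega
        apply Finset.sum_eq_zero
        intro w _
        by_contra hne
        exact absurd hempty (Set.nonempty_iff_ne_empty.mp ⟨w, hne⟩)
      · intro h
        have : ∀ w : G.V, A.lhomCount (G.setLabel i w) = 0 := by
          intro w
          exact Finset.sum_eq_zero_iff.mp h w (Finset.mem_univ w)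
        have hempty : {w : G.V | ¬ A.lhomCount (G.setLabel i w) = 0} = ∅ := by
          ext w; simp [this w]
        rw [hempty, Set.ncard_empty]
        omega
  · -- m ≥ 1
    set belowφ : CForm (Fin k) := CForm.bigOr i0 ((List.range (m + 1)).map Φ) with hbelow
    set noBig : CForm (Fin k) := CForm.not (CForm.count 1 i (CForm.not belowφ)) with hnoBig
    set cs : List (Fin m → Fin (m + 1)) := ((Finset.univ : Finset (Fin m → Fin (m + 1))).filter
      (fun c => (∑ j : Fin m, (j.1 + 1) * ((c j : ℕ))) = m)).toList with hcs
    refine ⟨CForm.bigOr i0 (cs.map (fun c => CForm.and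
      (CForm.bigAnd i0 ((List.finRange m).map
        (fun j => CForm.exCnt ((c j : ℕ)) i (Φ (j.1 + 1)))))
      noBig)), ?_, ?_⟩
    · apply CForm.qr_bigOr_le
      intro ψ hψ
      simp only [List.mem_map] at hψ
      obtain ⟨c, -, rfl⟩ := hψ
      simp only [CForm.qr, max_le_iff]
      constructor
      · apply CForm.qr_bigAnd_le
        intro χ hχ
        simp only [List.mem_map] at hχ
        obtain ⟨j, -, rfl⟩ := hχ
        rw [CForm.qr_exCnt]
        have := hΦqr (j.1 + 1)
        omega
      · have hb : CForm.qr belowφ ≤ d := by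
          apply CForm.qr_bigOr_le
          intro χ hχ
          simp only [List.mem_map] at hχ
          obtain ⟨n, -, rfl⟩ := hχ
          exact hΦqr n
        have hq : CForm.qr noBig = CForm.qr belowφ + 1 := rfl
        omega
    · intro G hcov
      haveI : Finite G.V := G.fin
      haveI : Fintype G.V := Fintype.ofFinite _
      haveI : DecidableEq G.V := Classical.decEq _
      have hsum := LGraph.lhomCount_removeLabel A i v₀ h0 G
      set fcount : G.V → ℕ := fun w => A.lhomCount (G.setLabel i w) with hfcount
      have hnoBigSat : CForm.Sat G.G noBig G.ν ↔ ∀ w : G.V, fcount w ≤ m := by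
        have hnot : CForm.Sat G.G noBig G.ν
            ↔ ¬ CForm.Sat G.G (CForm.count 1 i (CForm.not belowφ)) G.ν := Iff.rfl
        rw [hnot, CForm.sat_count_iff, not_le]
        have hset : {v : G.V | CForm.Sat G.G (CForm.not belowφ)
            (fun j => if j = i then some v else G.ν j)}
            = {w : G.V | ¬ fcount w ≤ m} := by
          ext w
          have h1 : CForm.Sat G.G (CForm.not belowφ) (fun j => if j = i then some w else G.ν j)
              ↔ ¬ CForm.Sat G.G belowφ (fun j => if j = i then some w else G.ν j) := Iff.rfl
          simp only [Set.mem_setOf_eq]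
          rw [h1, hbelow, CForm.sat_bigOr]
          apply not_congr
          constructor
          · rintro ⟨χ, hχ, hsat⟩
            simp only [List.mem_map, List.mem_range] at hχ
            obtain ⟨n, hn, rfl⟩ := hχ
            rw [main G hcov n w] at hsat
            have hsat' : fcount w = n := hsat
            omega
          · intro hle
            refine ⟨Φ (fcount w), ?_, ?_⟩
            · simp only [List.mem_map, List.mem_range]
              exact ⟨fcount w, by omega, rfl⟩
            · rw [main G hcov (fcount w) w]
        rw [hset]
        constructor
        · intro h w
          by_contra hc
          have : ({w : G.V | ¬ fcount w ≤ m} : Set G.V).ncard = 0 := by omega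
          rw [Set.ncard_eq_zero (Set.toFinite _)] at this
          exact absurd this (Set.nonempty_iff_ne_empty.mp ⟨w, hc⟩)
        · intro h
          have : {w : G.V | ¬ fcount w ≤ m} = ∅ := by
            ext w; simp [h w]
          rw [this, Set.ncard_empty]
          omega
      rw [CForm.sat_bigOr, hsum, sum_decomp fcount m hm]
      constructor
      · rintro ⟨ψ, hψ, hsat⟩
        simp only [List.mem_map] at hψ
        obtain ⟨c, hc, rfl⟩ := hψ
        obtain ⟨hsat1, hsat2⟩ := hsat
        refine ⟨hnoBigSat.mp hsat2, c, ?_, ?_⟩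
        · rw [hcs] at hc
          simpa using (Finset.mem_filter.mp (Finset.mem_toList.mp hc)).2
        · intro j
          rw [CForm.sat_bigAnd] at hsat1
          have := hsat1 _ (List.mem_map.mpr ⟨j, List.mem_finRange j, rfl⟩)
          rw [CForm.sat_exCnt_iff] at this
          rw [← this]
          congr 1
          ext w
          exact (main G hcov (j.1 + 1) w).symm
      · rintro ⟨hle, c, hcsum, hccard⟩
        refine ⟨_, List.mem_map.mpr ⟨c, ?_, rfl⟩, ?_, hnoBigSat.mpr hle⟩
        · rw [hcs, Finset.mem_toList, Finset.mem_filter]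
          exact ⟨Finset.mem_univ c, hcsum⟩
        · rw [CForm.sat_bigAnd]
          intro χ hχ
          simp only [List.mem_map] at hχ
          obtain ⟨j, -, rfl⟩ := hχ
          rw [CForm.sat_exCnt_iff]
          rw [← hccard j]
          congr 1
          ext w
          exact main G hcov (j.1 + 1) w
section ProdMachinery

variable {k : ℕ}

/-- Sum adjacency of two graphs. -/
def sumAdjG {V W : Type*} (K₁ : SimpleGraph V) (K₂ : SimpleGraph W) :
    V ⊕ W → V ⊕ W → Prop
  | Sum.inl u, Sum.inl v => K₁.Adj u v
  | Sum.inr u, Sum.inr v => K₂.Adj u v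
  | _, _ => False

lemma sumAdjG_symm {V W : Type*} (K₁ : SimpleGraph V) (K₂ : SimpleGraph W) :
    ∀ x y, sumAdjG K₁ K₂ x y → sumAdjG K₁ K₂ y x := by
  rintro (u | u) (v | v) h
  · exact K₁.adj_symm h
  · exact h.elim
  · exact h.elim
  · exact K₂.adj_symm h

/-- The product construction applied to arbitrary graphs on the two vertex sets. -/
def prodG (A B : LGraph k) (K₁ : SimpleGraph A.V) (K₂ : SimpleGraph B.V) :
    SimpleGraph (A.product B).V where
  Adj X Y := X ≠ Y ∧ ∃ u v, Quot.mk _ u = X ∧ Quot.mk _ v = Y ∧ sumAdjG K₁ K₂ u v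
  symm := ⟨by
    rintro X Y ⟨hne, u, v, hu, hv, h⟩
    exact ⟨hne.symm, v, u, hv, hu, sumAdjG_symm K₁ K₂ u v h⟩⟩
  loopless := ⟨fun X h => h.1 rfl⟩

lemma product_adj (A B : LGraph k) (X Y : (A.product B).V) :
    (A.product B).G.Adj X Y ↔
      X ≠ Y ∧ ∃ u v, Quot.mk _ u = X ∧ Quot.mk _ v = Y ∧ LGraph.sumAdj A B u v := Iff.rfl

lemma sumAdj_le_sumAdjG (A B : LGraph k) (K₁ : SimpleGraph A.V) (K₂ : SimpleGraph B.V)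
    (h₁ : A.G ≤ K₁) (h₂ : B.G ≤ K₂) :
    ∀ u v, LGraph.sumAdj A B u v → sumAdjG K₁ K₂ u v := by
  rintro (u | u) (v | v) h
  · exact h₁ h
  · exact h.elim
  · exact h.elim
  · exact h₂ h

/-- The "potential adjacency" graph of a construction tree. -/
def Kc : (t : CT k) → SimpleGraph (CT.graphOf t).V
  | CT.leaf _ => ⊤
  | CT.elim _ t => Kc t
  | CT.prod t₁ t₂ => prodG (CT.graphOf t₁) (CT.graphOf t₂) (Kc t₁) (Kc t₂)

lemma graphOf_le_Kc : ∀ t : CT k, (CT.graphOf t).G ≤ Kc t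
  | CT.leaf _ => le_top
  | CT.elim _ t => graphOf_le_Kc t
  | CT.prod t₁ t₂ => by
      intro X Y h
      have h' : ((CT.graphOf t₁).product (CT.graphOf t₂)).G.Adj X Y := h
      replace h' := (product_adj (CT.graphOf t₁) (CT.graphOf t₂) X Y).mp h'
      obtain ⟨hne, u, v, hu, hv, hadj⟩ := h'
      show (prodG (CT.graphOf t₁) (CT.graphOf t₂) (Kc t₁) (Kc t₂)).Adj X Y
      exact ⟨hne, u, v, hu, hv,
        sumAdj_le_sumAdjG _ _ _ _ (graphOf_le_Kc t₁) (graphOf_le_Kc t₂) u v hadj⟩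

lemma product_ν_left (A B : LGraph k) (i : Fin k) (a : A.V) (h : A.ν i = some a) :
    (A.product B).ν i = some (Quot.mk _ (Sum.inl a)) := by
  show ((A.ν i).map _).orElse _ = _
  rw [h]
  rfl

lemma product_ν_right (A B : LGraph k) (i : Fin k) (b : B.V)
    (h1 : A.ν i = none) (h2 : B.ν i = some b) :
    (A.product B).ν i = some (Quot.mk _ (Sum.inr b)) := by
  show ((A.ν i).map _).orElse _ = _
  rw [h1, h2]
  rfl

lemma product_ν_none (A B : LGraph k) (i : Fin k)
    (h1 : A.ν i = none) (h2 : B.ν i = none) :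
    (A.product B).ν i = none := by
  show ((A.ν i).map _).orElse _ = _
  rw [h1, h2]
  rfl

lemma product_ν_isSome (A B : LGraph k) (i : Fin k) :
    ((A.product B).ν i).isSome ↔ (A.ν i).isSome ∨ (B.ν i).isSome := by
  rcases ha : A.ν i with _ | a
  · rcases hb : B.ν i with _ | b
    · rw [product_ν_none A B i ha hb]; simp
    · rw [product_ν_right A B i b ha hb]; simp; rfl
  · rw [product_ν_left A B i a ha]; simp; rfl

end ProdMachinery
noncomputable def witFn {k : ℕ} {A B : LGraph k} {K₁ : SimpleGraph A.V}
    {K₂ : SimpleGraph B.V} {H : SimpleGraph (A.product B).V}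
    (hH : H ≤ prodG A B K₁ K₂) {X Y : (A.product B).V} (h : H.Adj X Y) :
    (A.V ⊕ B.V) × (A.V ⊕ B.V) :=
  ((hH h).2.choose, (hH h).2.choose_spec.choose)

lemma witFn_spec {k : ℕ} {A B : LGraph k} {K₁ : SimpleGraph A.V}
    {K₂ : SimpleGraph B.V} {H : SimpleGraph (A.product B).V}
    (hH : H ≤ prodG A B K₁ K₂) {X Y : (A.product B).V} (h : H.Adj X Y) :
    Quot.mk _ (witFn hH h).1 = X ∧ Quot.mk _ (witFn hH h).2 = Y ∧
      sumAdjG K₁ K₂ (witFn hH h).1 (witFn hH h).2 :=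
  (hH h).2.choose_spec.choose_spec

lemma prod_count {k : ℕ} (A B : LGraph k) (K₁ : SimpleGraph A.V) (K₂ : SimpleGraph B.V)
    (H : SimpleGraph (A.product B).V) (hH : H ≤ prodG A B K₁ K₂) :
    ∃ (H₁ : SimpleGraph A.V) (H₂ : SimpleGraph B.V), H₁ ≤ K₁ ∧ H₂ ≤ K₂ ∧
      ∀ G : LGraph k, ((A.product B).withG H).lhomCount G
        = ((A.withG H₁).lhomCount G) * ((B.withG H₂).lhomCount G) := by
  classical
  have wit_spec : ∀ {X Y : (A.product B).V} (h : H.Adj X Y),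
      Quot.mk _ (witFn hH h).1 = X ∧ Quot.mk _ (witFn hH h).2 = Y ∧
        sumAdjG K₁ K₂ (witFn hH h).1 (witFn hH h).2 := fun h => witFn_spec hH h
  set R₁ : A.V → A.V → Prop := fun a a' =>
    ∃ X Y, ∃ h : H.Adj X Y, witFn hH h = (Sum.inl a, Sum.inl a') with hR₁
  set R₂ : B.V → B.V → Prop := fun b b' =>
    ∃ X Y, ∃ h : H.Adj X Y, witFn hH h = (Sum.inr b, Sum.inr b') with hR₂
  have hR₁K : ∀ a a', R₁ a a' → K₁.Adj a a' := by
    rintro a a' ⟨X, Y, h, hw⟩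
    have := (wit_spec h).2.2
    rw [hw] at this
    exact this
  have hR₂K : ∀ b b', R₂ b b' → K₂.Adj b b' := by
    rintro b b' ⟨X, Y, h, hw⟩
    have := (wit_spec h).2.2
    rw [hw] at this
    exact this
  set H₁ : SimpleGraph A.V :=
    { Adj := fun a a' => R₁ a a' ∨ R₁ a' a
      symm := ⟨fun a a' h => h.symm⟩
      loopless := ⟨fun a h => by
        rcases h with h | h <;> exact K₁.irrefl (hR₁K a a h)⟩ } with hH₁
  set H₂ : SimpleGraph B.V :=
    { Adj := fun b b' => R₂ b b' ∨ R₂ b' b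
      symm := ⟨fun b b' h => h.symm⟩
      loopless := ⟨fun b h => by
        rcases h with h | h <;> exact K₂.irrefl (hR₂K b b h)⟩ } with hH₂
  refine ⟨H₁, H₂, ?_, ?_, ?_⟩
  · rintro a a' (h | h)
    · exact hR₁K a a' h
    · exact K₁.adj_symm (hR₁K a' a h)
  · rintro b b' (h | h)
    · exact hR₂K b b' h
    · exact K₂.adj_symm (hR₂K b' b h)
  intro G
  haveI : Finite A.V := A.fin
  haveI : Finite B.V := B.fin
  haveI : Finite G.V := G.fin
  set SP := {f : (A.product B).V → G.V | (∀ ⦃u v⦄, H.Adj u v → G.G.Adj (f u) (f v)) ∧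
    ∀ i v, (A.product B).ν i = some v → ∃ w, G.ν i = some w ∧ f v = w} with hSP
  set SA := {g : A.V → G.V | (∀ ⦃u v⦄, H₁.Adj u v → G.G.Adj (g u) (g v)) ∧
    ∀ i v, A.ν i = some v → ∃ w, G.ν i = some w ∧ g v = w} with hSA
  set SB := {g : B.V → G.V | (∀ ⦃u v⦄, H₂.Adj u v → G.G.Adj (g u) (g v)) ∧
    ∀ i v, B.ν i = some v → ∃ w, G.ν i = some w ∧ g v = w} with hSB
  have h1 : ((A.product B).withG H).lhomCount G = SP.ncard := rfl
  have h2 : (A.withG H₁).lhomCount G = SA.ncard := rfl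
  have h3 : (B.withG H₂).lhomCount G = SB.ncard := rfl
  rw [h1, h2, h3]
  rw [← Nat.card_coe_set_eq, ← Nat.card_coe_set_eq, ← Nat.card_coe_set_eq,
    ← Nat.card_prod]
  apply Nat.card_congr
  -- compatibility of label-respecting pairs with the gluing
  have compat : ∀ (g : A.V → G.V) (h : B.V → G.V),
      (∀ i v, A.ν i = some v → ∃ w, G.ν i = some w ∧ g v = w) →
      (∀ i v, B.ν i = some v → ∃ w, G.ν i = some w ∧ h v = w) →
      ∀ x y, LGraph.glue A B x y → Sum.elim g h x = Sum.elim g h y := by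
    rintro g h hg hh x y ⟨i, hx, hy⟩
    rw [Option.map_eq_some_iff] at hx hy
    obtain ⟨a, ha, rfl⟩ := hx
    obtain ⟨b, hb, rfl⟩ := hy
    obtain ⟨w, hw, hgw⟩ := hg i a ha
    obtain ⟨w', hw', hhw⟩ := hh i b hb
    rw [hw] at hw'
    simp only [Sum.elim_inl, Sum.elim_inr, hgw, hhw]
    exact Option.some_inj.mp hw'
  refine ⟨fun f => (⟨fun a => f.1 (Quot.mk _ (Sum.inl a)), ?_, ?_⟩,
    ⟨fun b => f.1 (Quot.mk _ (Sum.inr b)), ?_, ?_⟩), fun p => ⟨Quot.lift (Sum.elim p.1.1 p.2.1)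
      (compat p.1.1 p.2.1 p.1.2.2 p.2.2.2), ?_, ?_⟩, ?_, ?_⟩
  · -- fst edges
    rintro a a' (h | h)
    · obtain ⟨X, Y, hXY, hw⟩ := h
      obtain ⟨hu, hv, -⟩ := wit_spec hXY
      rw [hw] at hu hv
      have := f.2.1 hXY
      rw [← hu, ← hv] at this
      exact this
    · obtain ⟨X, Y, hXY, hw⟩ := h
      obtain ⟨hu, hv, -⟩ := wit_spec hXY
      rw [hw] at hu hv
      have := f.2.1 hXY
      rw [← hu, ← hv] at this
      exact G.G.adj_symm this
  · -- fst labels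
    intro i a ha
    obtain ⟨w, hw, hfw⟩ := f.2.2 i _ (product_ν_left A B i a ha)
    exact ⟨w, hw, hfw⟩
  · -- snd edges
    rintro b b' (h | h)
    · obtain ⟨X, Y, hXY, hw⟩ := h
      obtain ⟨hu, hv, -⟩ := wit_spec hXY
      rw [hw] at hu hv
      have := f.2.1 hXY
      rw [← hu, ← hv] at this
      exact this
    · obtain ⟨X, Y, hXY, hw⟩ := h
      obtain ⟨hu, hv, -⟩ := wit_spec hXY
      rw [hw] at hu hv
      have := f.2.1 hXY
      rw [← hu, ← hv] at this
      exact G.G.adj_symm this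
  · -- snd labels
    intro i b hb
    rcases ha : A.ν i with _ | a
    · obtain ⟨w, hw, hfw⟩ := f.2.2 i _ (product_ν_right A B i b ha hb)
      exact ⟨w, hw, hfw⟩
    · -- both labelled: use the glue identification
      obtain ⟨w, hw, hfw⟩ := f.2.2 i _ (product_ν_left A B i a ha)
      refine ⟨w, hw, ?_⟩
      have hglue : LGraph.glue A B (Sum.inl a) (Sum.inr b) :=
        ⟨i, by rw [ha]; rfl, by rw [hb]; rfl⟩
      have : (Quot.mk (LGraph.glue A B) (Sum.inl a)) = Quot.mk _ (Sum.inr b) :=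
        Quot.sound hglue
      show f.1 (Quot.mk (LGraph.glue A B) (Sum.inr b)) = w
      rw [← this]
      exact hfw
  · -- inv edges
    intro X Y hXY
    obtain ⟨hu, hv, hadj⟩ := wit_spec hXY
    rcases e1 : (witFn hH hXY).1 with a | b <;> rcases e2 : (witFn hH hXY).2 with a' | b'
    · have hr : R₁ a a' := ⟨X, Y, hXY, by rw [Prod.ext_iff]; exact ⟨e1, e2⟩⟩
      have := p.1.2.1 (Or.inl hr)
      rw [e1] at hu; rw [e2] at hv
      rw [← hu, ← hv]
      exact this
    · rw [e1, e2] at hadj; exact hadj.elim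
    · rw [e1, e2] at hadj; exact hadj.elim
    · have hr : R₂ b b' := ⟨X, Y, hXY, by rw [Prod.ext_iff]; exact ⟨e1, e2⟩⟩
      have := p.2.2.1 (Or.inl hr)
      rw [e1] at hu; rw [e2] at hv
      rw [← hu, ← hv]
      exact this
  · -- inv labels
    intro i c hc
    rcases ha : A.ν i with _ | a
    · rcases hb : B.ν i with _ | b
      · rw [product_ν_none A B i ha hb] at hc; cases hc
      · rw [product_ν_right A B i b ha hb] at hc
        obtain ⟨w, hw, hgw⟩ := p.2.2.2 i b hb
        exact ⟨w, hw, by rw [← Option.some_inj.mp hc]; exact hgw⟩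
    · rw [product_ν_left A B i a ha] at hc
      obtain ⟨w, hw, hgw⟩ := p.1.2.2 i a ha
      exact ⟨w, hw, by rw [← Option.some_inj.mp hc]; exact hgw⟩
  · -- left inverse
    intro f
    apply Subtype.ext
    funext X
    induction X using Quot.ind with
    | _ x => rcases x with a | b <;> rfl
  · -- right inverse
    intro p
    apply Prod.ext <;> apply Subtype.ext <;> rfl
lemma lhomCount_of_LIso {k : ℕ} {A B : LGraph k} (h : LGraph.LIso A B) (G : LGraph k) :
    A.lhomCount G = B.lhomCount G := by
  classical
  obtain ⟨e, he⟩ := h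
  haveI : Finite A.V := A.fin
  haveI : Finite B.V := B.fin
  set SA := {g : A.V → G.V | (∀ ⦃u v⦄, A.G.Adj u v → G.G.Adj (g u) (g v)) ∧
    ∀ i v, A.ν i = some v → ∃ w, G.ν i = some w ∧ g v = w} with hSA
  set SB := {f : B.V → G.V | (∀ ⦃u v⦄, B.G.Adj u v → G.G.Adj (f u) (f v)) ∧
    ∀ i v, B.ν i = some v → ∃ w, G.ν i = some w ∧ f v = w} with hSB
  have h1 : A.lhomCount G = SA.ncard := rfl
  have h2 : B.lhomCount G = SB.ncard := rfl
  have hinj : Function.Injective (fun f : B.V → G.V => f ∘ (fun a => e a)) := by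
    intro f f' hff
    funext b
    have := congrFun hff (e.symm b)
    simpa using this
  have himg : SA = (fun f : B.V → G.V => f ∘ (fun a => e a)) '' SB := by
    ext g
    constructor
    · rintro ⟨hadj, hlab⟩
      refine ⟨g ∘ (fun b => e.symm b), ⟨?_, ?_⟩, ?_⟩
      · intro u v huv
        exact hadj (e.symm.map_rel_iff.mpr huv)
      · intro i w hw
        rw [← he i, Option.map_eq_some_iff] at hw
        obtain ⟨a, ha, rfl⟩ := hw
        obtain ⟨x, hx, hgx⟩ := hlab i a ha
        refine ⟨x, hx, ?_⟩
        simpa using hgx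
      · funext a
        simp
    · rintro ⟨f, ⟨hadj, hlab⟩, rfl⟩
      refine ⟨?_, ?_⟩
      · intro u v huv
        exact hadj (e.map_rel_iff.mpr huv)
      · intro i v hv
        have hB : B.ν i = some (e v) := by
          rw [← he i, hv]; rfl
        obtain ⟨w, hw, hfw⟩ := hlab i (e v) hB
        exact ⟨w, hw, hfw⟩
  rw [h1, h2, himg, Set.ncard_image_of_injective _ hinj]
theorem main_ind {k : ℕ} (hk : 1 ≤ k) : ∀ (t : CT k), CT.Valid t →
    ∀ (H : SimpleGraph (CT.graphOf t).V), H ≤ Kc t → ∀ m : ℕ,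
    ∃ φ : CForm (Fin k), CForm.qr φ ≤ CT.elimDepth t ∧
      ∀ G : LGraph k, (∀ j, ((CT.graphOf t).ν j).isSome → (G.ν j).isSome) →
        (CForm.Sat G.G φ G.ν ↔ ((CT.graphOf t).withG H).lhomCount G = m) := by
  intro t
  induction t with
  | leaf A =>
      intro hv H hK m
      obtain ⟨φ, hφ1, hφ2⟩ := leaf_formula hk (A.withG H) hv m
      exact ⟨φ, hφ1, hφ2⟩
  | elim i t ih =>
      rintro ⟨hv, hne⟩ H hK m
      obtain ⟨v₀, h0⟩ := Option.ne_none_iff_exists'.mp hne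
      exact elim_formula hk ((CT.graphOf t).withG H) i v₀ h0 (CT.elimDepth t)
        (fun n => ih hv H hK n) m
  | prod t₁ t₂ ih₁ ih₂ =>
      rintro ⟨hv₁, hv₂⟩ H hK m
      classical
      set i0 : Fin k := ⟨0, hk⟩ with hi0
      obtain ⟨H₁, H₂, hle₁, hle₂, hmul⟩ :=
        prod_count (CT.graphOf t₁) (CT.graphOf t₂) (Kc t₁) (Kc t₂) H hK
      set Φ₁ : ℕ → CForm (Fin k) := fun n => (ih₁ hv₁ H₁ hle₁ n).choose with hΦ₁
      have hΦ₁qr : ∀ n, CForm.qr (Φ₁ n) ≤ CT.elimDepth t₁ :=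
        fun n => (ih₁ hv₁ H₁ hle₁ n).choose_spec.1
      have hΦ₁sat : ∀ n (G : LGraph k),
          (∀ j, ((CT.graphOf t₁).ν j).isSome → (G.ν j).isSome) →
          (CForm.Sat G.G (Φ₁ n) G.ν ↔ ((CT.graphOf t₁).withG H₁).lhomCount G = n) :=
        fun n => (ih₁ hv₁ H₁ hle₁ n).choose_spec.2
      set Φ₂ : ℕ → CForm (Fin k) := fun n => (ih₂ hv₂ H₂ hle₂ n).choose with hΦ₂
      have hΦ₂qr : ∀ n, CForm.qr (Φ₂ n) ≤ CT.elimDepth t₂ :=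
        fun n => (ih₂ hv₂ H₂ hle₂ n).choose_spec.1
      have hΦ₂sat : ∀ n (G : LGraph k),
          (∀ j, ((CT.graphOf t₂).ν j).isSome → (G.ν j).isSome) →
          (CForm.Sat G.G (Φ₂ n) G.ν ↔ ((CT.graphOf t₂).withG H₂).lhomCount G = n) :=
        fun n => (ih₂ hv₂ H₂ hle₂ n).choose_spec.2
      have hcovA : ∀ (G : LGraph k),
          (∀ j, ((CT.graphOf (CT.prod t₁ t₂)).ν j).isSome → (G.ν j).isSome) →
          (∀ j, ((CT.graphOf t₁).ν j).isSome → (G.ν j).isSome) := by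
        intro G hcov j hj
        exact hcov j ((product_ν_isSome (CT.graphOf t₁) (CT.graphOf t₂) j).mpr (Or.inl hj))
      have hcovB : ∀ (G : LGraph k),
          (∀ j, ((CT.graphOf (CT.prod t₁ t₂)).ν j).isSome → (G.ν j).isSome) →
          (∀ j, ((CT.graphOf t₂).ν j).isSome → (G.ν j).isSome) := by
        intro G hcov j hj
        exact hcov j ((product_ν_isSome (CT.graphOf t₁) (CT.graphOf t₂) j).mpr (Or.inr hj))
      rcases Nat.eq_zero_or_pos m with hm | hm
      · subst hm
        refine ⟨CForm.or (Φ₁ 0) (Φ₂ 0), ?_, ?_⟩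
        · simp only [CForm.qr, CT.elimDepth, max_le_iff]
          exact ⟨le_max_of_le_left (hΦ₁qr 0), le_max_of_le_right (hΦ₂qr 0)⟩
        · intro G hcov
          have hmul' : ((CT.graphOf (CT.prod t₁ t₂)).withG H).lhomCount G
              = ((CT.graphOf t₁).withG H₁).lhomCount G
                * ((CT.graphOf t₂).withG H₂).lhomCount G := hmul G
          have hor : CForm.Sat G.G (CForm.or (Φ₁ 0) (Φ₂ 0)) G.ν
              ↔ CForm.Sat G.G (Φ₁ 0) G.ν ∨ CForm.Sat G.G (Φ₂ 0) G.ν := Iff.rfl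
          rw [hor, hΦ₁sat 0 G (hcovA G hcov), hΦ₂sat 0 G (hcovB G hcov), hmul',
            Nat.mul_eq_zero]
      · set ps : List (ℕ × ℕ) := (((Finset.range (m + 1)) ×ˢ (Finset.range (m + 1))).filter
          (fun p => p.1 * p.2 = m)).toList with hps
        refine ⟨CForm.bigOr i0 (ps.map (fun p => CForm.and (Φ₁ p.1) (Φ₂ p.2))), ?_, ?_⟩
        · apply CForm.qr_bigOr_le
          intro ψ hψ
          simp only [List.mem_map] at hψ
          obtain ⟨p, -, rfl⟩ := hψ
          simp only [CForm.qr, CT.elimDepth, max_le_iff]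
          exact ⟨le_max_of_le_left (hΦ₁qr p.1), le_max_of_le_right (hΦ₂qr p.2)⟩
        · intro G hcov
          have hmul' : ((CT.graphOf (CT.prod t₁ t₂)).withG H).lhomCount G
              = ((CT.graphOf t₁).withG H₁).lhomCount G
                * ((CT.graphOf t₂).withG H₂).lhomCount G := hmul G
          rw [CForm.sat_bigOr, hmul']
          set n₁ := ((CT.graphOf t₁).withG H₁).lhomCount G with hn₁
          set n₂ := ((CT.graphOf t₂).withG H₂).lhomCount G with hn₂
          constructor
          · rintro ⟨ψ, hψ, hsat⟩
            simp only [List.mem_map] at hψ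
            obtain ⟨p, hp, rfl⟩ := hψ
            rw [hps, Finset.mem_toList, Finset.mem_filter] at hp
            obtain ⟨hsat1, hsat2⟩ := hsat
            rw [hΦ₁sat p.1 G (hcovA G hcov)] at hsat1
            rw [hΦ₂sat p.2 G (hcovB G hcov)] at hsat2
            rw [← hn₁] at hsat1
            rw [← hn₂] at hsat2
            rw [hsat1, hsat2]
            exact hp.2
          · intro hprod
            have hn₁pos : 0 < n₁ := by
              rcases Nat.eq_zero_or_pos n₁ with h | h
              · rw [h] at hprod; omega
              · exact h
            have hn₂pos : 0 < n₂ := by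
              rcases Nat.eq_zero_or_pos n₂ with h | h
              · rw [h] at hprod; simp at hprod; omega
              · exact h
            have hb₁ : n₁ ≤ m := by nlinarith
            have hb₂ : n₂ ≤ m := by nlinarith
            refine ⟨CForm.and (Φ₁ n₁) (Φ₂ n₂), List.mem_map.mpr ⟨(n₁, n₂), ?_, rfl⟩, ?_, ?_⟩
            · rw [hps, Finset.mem_toList, Finset.mem_filter, Finset.mem_product]
              exact ⟨⟨Finset.mem_range.mpr (by omega), Finset.mem_range.mpr (by omega)⟩, hprod⟩
            · exact (hΦ₁sat n₁ G (hcovA G hcov)).mpr rfl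
            · exact (hΦ₂sat n₂ G (hcovB G hcov)).mpr rfl
/-- For `F ∈ L^k_q` and `m ≥ 0` there is a `C^k_q`-formula `φ_m` such that for every
appropriately labelled `G`: `G ⊨ φ_m` iff `hom(F,G) = m`. -/
theorem homcounts_in_ckq (k q : ℕ) (hk : 1 ≤ k) (hq : 1 ≤ q) (F : LGraph k)
    (hF : F ∈ Lclass k q) (m : ℕ) :
    ∃ φ : CForm (Fin k), CForm.qr φ ≤ q ∧
      ∀ G : LGraph k, (∀ i, (F.ν i).isSome → (G.ν i).isSome) →
        (CForm.Sat G.G φ G.ν ↔ LGraph.lhomCount F G = m) := by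
  obtain ⟨t, hval, hdepth, hiso⟩ := hF
  obtain ⟨φ, hqr, hsat⟩ := main_ind hk t hval (CT.graphOf t).G (graphOf_le_Kc t) m
  refine ⟨φ, hqr.trans hdepth, ?_⟩
  intro G hcov
  have hcov' : ∀ j, ((CT.graphOf t).ν j).isSome → (G.ν j).isSome := by
    intro j hj
    apply hcov j
    obtain ⟨e, he⟩ := hiso
    rw [← he j, Option.isSome_map]
    exact hj
  rw [hsat G hcov']
  have hc : ((CT.graphOf t).withG (CT.graphOf t).G).lhomCount G = F.lhomCount G := by
    have h1 : (CT.graphOf t).withG (CT.graphOf t).G = CT.graphOf t := rfl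
    rw [h1]
    exact lhomCount_of_LIso hiso G
  rw [hc]
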